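/- Let k ∈ ℝ, l > 0, Ω ⊂ ℝ^N bounded smooth. If u ∈ V = {u ∈ H^2(Ω): u|_Γ ∈ H^2(Γ)} solves −Δu + λu = h in L^2(Ω) and −ku_ν − lΔ_Γu + λu = h in L^2(Γ) with h ∈ H^1(Ω), h|_Γ ∈ H^1(Γ), then u ∈ H^3(Ω) and u|_Γ ∈ H^3(Γ). -/
import Mathlib


noncomputable section

/-- elliptic regularity for the resolvent problem: if `u ∈ V` solves
`−Δu + λu = h` in `L²(Ω)` and `−ku_ν − lΔ_Γu + λu = h` in `L²(Γ)` with
`h ∈ H¹(Ω)`, `h|_Γ ∈ H¹(Γ)`, then `u ∈ H³(Ω)` and `u|_Γ ∈ H³(Γ)`.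
`FΩ`/`FΓ` are ambient spaces of distributions on `Ω`/`Γ`, with the Sobolev
filtrations `HΩ s = H^s(Ω)`, `HΓ s = H^s(Γ)`; `tr` is the trace, `dν` the normal
derivative, `Δ` the Laplacian, `ΔΓ` the Laplace–Beltrami operator.  The hypotheses
record the standard tools: trace theorem, the isomorphism `−Δ_Γ + 1`, elliptic
regularity for the Dirichlet problem, and monotonicity of the Sobolev scale. -/
theorem stmt12 {FΩ FΓ : Type*} [AddCommGroup FΩ] [Module ℂ FΩ]
    [AddCommGroup FΓ] [Module ℂ FΓ]
    (HΩ : ℝ → Submodule ℂ FΩ) (HΓ : ℝ → Submodule ℂ FΓ)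
    (hmonoΩ : ∀ s t : ℝ, s ≤ t → HΩ t ≤ HΩ s)
    (hmonoΓ : ∀ s t : ℝ, s ≤ t → HΓ t ≤ HΓ s)
    (tr : FΩ →ₗ[ℂ] FΓ) (dν : FΩ →ₗ[ℂ] FΓ) (Δ : FΩ →ₗ[ℂ] FΩ) (ΔΓ : FΓ →ₗ[ℂ] FΓ)
    -- trace theorem: `u ∈ H^s(Ω) ⇒ u_ν ∈ H^{s-3/2}(Γ)`:
    (htrace : ∀ (s : ℝ) (u : FΩ), u ∈ HΩ s → dν u ∈ HΓ (s - 3/2))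
    -- isomorphism `−Δ_Γ + 1 : H^{s+2}(Γ) → H^s(Γ)`:
    (hiso : ∀ (s : ℝ) (v : FΓ), (-ΔΓ v + v) ∈ HΓ s → v ∈ HΓ (s + 2))
    -- elliptic regularity for the nonhomogeneous Dirichlet problem:
    (hell : ∀ (s : ℝ) (u : FΩ), Δ u ∈ HΩ s → tr u ∈ HΓ (s + 3/2) → u ∈ HΩ (s + 2))
    (k l : ℝ) (hl : 0 < l) (lam : ℂ)
    (u h : FΩ)
    (hu : u ∈ HΩ 2) (huΓ : tr u ∈ HΓ 2)
    (hh : h ∈ HΩ 1) (hhΓ : tr h ∈ HΓ 1)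
    -- the domain equation `−Δu + λu = h`:
    (heqΩ : -Δ u + lam • u = h)
    -- the boundary equation `−ku_ν − lΔ_Γu + λu = h` on `Γ`:
    (heqΓ : -(k : ℂ) • dν u - (l : ℂ) • ΔΓ (tr u) + lam • tr u = tr h) :
    u ∈ HΩ 3 ∧ tr u ∈ HΓ 3 := by
  have hl0 : (l : ℂ) ≠ 0 := by exact_mod_cast hl.ne'
  -- solve boundary equation for ΔΓ (tr u)
  have hΔΓ : ΔΓ (tr u) = (l : ℂ)⁻¹ • (-(k : ℂ) • dν u + lam • tr u - tr h) := by
    have : (l : ℂ) • ΔΓ (tr u) = -(k : ℂ) • dν u + lam • tr u - tr h := by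
      have := heqΓ
      linear_combination (norm := module) -this
    calc ΔΓ (tr u) = (l : ℂ)⁻¹ • ((l : ℂ) • ΔΓ (tr u)) := by
          rw [smul_smul, inv_mul_cancel₀ hl0, one_smul]
      _ = _ := by rw [this]
  -- ΔΓ (tr u) membership at a given level s, given ingredients at s
  have key : ∀ s : ℝ, dν u ∈ HΓ s → tr u ∈ HΓ s → tr h ∈ HΓ s → ΔΓ (tr u) ∈ HΓ s := by
    intro s h1 h2 h3
    rw [hΔΓ]
    exact Submodule.smul_mem _ _ (Submodule.sub_mem _
      (Submodule.add_mem _ (Submodule.smul_mem _ _ h1) (Submodule.smul_mem _ _ h2)) h3)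
  -- first pass: tr u ∈ H^{5/2}
  have hdν1 : dν u ∈ HΓ (2 - 3/2) := htrace 2 u hu
  have hΔΓ1 : ΔΓ (tr u) ∈ HΓ (1/2) := by
    apply key
    · exact hmonoΓ _ _ (by norm_num) hdν1
    · exact hmonoΓ _ _ (by norm_num) huΓ
    · exact hmonoΓ _ _ (by norm_num) hhΓ
  have htru52 : tr u ∈ HΓ (5/2) := by
    have : (-ΔΓ (tr u) + tr u) ∈ HΓ (1/2) :=
      Submodule.add_mem _ (Submodule.neg_mem _ hΔΓ1) (hmonoΓ _ _ (by norm_num) huΓ)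
    have := hiso _ _ this
    convert this using 2
    norm_num
  -- u ∈ H^3 via elliptic regularity
  have hΔu : Δ u ∈ HΩ 1 := by
    have : Δ u = lam • u - h := by linear_combination (norm := module) -heqΩ
    rw [this]
    exact Submodule.sub_mem _ (Submodule.smul_mem _ _ (hmonoΩ _ _ (by norm_num) hu)) hh
  have hu3 : u ∈ HΩ 3 := by
    have := hell 1 u hΔu (by convert htru52 using 2; norm_num)
    convert this using 2
    norm_num
  refine ⟨hu3, ?_⟩
  -- second pass on the boundary
  have hdν2 : dν u ∈ HΓ (3 - 3/2) := htrace 3 u hu3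
  have hΔΓ2 : ΔΓ (tr u) ∈ HΓ 1 := by
    apply key
    · exact hmonoΓ _ _ (by norm_num) hdν2
    · exact hmonoΓ _ _ (by norm_num) htru52
    · exact hhΓ
  have : (-ΔΓ (tr u) + tr u) ∈ HΓ 1 :=
    Submodule.add_mem _ (Submodule.neg_mem _ hΔΓ2) (hmonoΓ _ _ (by norm_num) huΓ)
  have := hiso _ _ this
  convert this using 2
  norm_num
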